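/- With the notation of the context, suppose the graph is label-connected, and let y_l : Fin n → ℝ be a vector of given labels. Define the sequence y : ℕ → (Fin n → ℝ) by: y 0 i = y_l i for i ∈ Lab and y 0 i = 0 for i ∈ U; and y (t+1) i = y_l i for i ∈ Lab, while y (t+1) i = ∑_j P i j · y t j for i ∈ U. Then the sequence y t converges as t → ∞ to the vector ŷ determined by: ŷ i = y_l i for i ∈ Lab, and the restriction of ŷ to U is the unique solution z (indexed by U) of (I − P_UU) z = b, where b u = ∑_{j ∈ Lab} P u j · y_l j for u ∈ U. -/

import Mathlib

open Matrix

set_option maxHeartbeats 1000000 in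
/-- For a label-connected weighted graph, the iterative label
propagation sequence converges to the vector which agrees with the given labels on
`Lab` and whose restriction to the unlabeled vertices `U` is the unique solution of
`(I − P_UU) z = b`, where `b u = ∑_{j ∈ Lab} P u j · y_l j`. -/
theorem label_propagation_converges (n : ℕ)
    (A : Matrix (Fin n) (Fin n) ℝ)
    (hsymm : ∀ i j, A i j = A j i)
    (hnn : ∀ i j, 0 ≤ A i j)
    (hdiag : ∀ i, A i i = 0)
    (hdeg : ∀ i, 0 < ∑ j, A i j)
    (P : Matrix (Fin n) (Fin n) ℝ)
    (hP : ∀ i j, P i j = A i j / ∑ l, A i l)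
    (Lab : Finset (Fin n))
    (hconn : ∀ u : Fin n, u ∉ Lab → ∃ (t : ℕ) (v : Fin (t + 1) → Fin n),
      v 0 = u ∧ (∀ i : Fin t, 0 < A (v i.castSucc) (v i.succ)) ∧ v (Fin.last t) ∈ Lab)
    (yl : Fin n → ℝ)
    (y : ℕ → Fin n → ℝ)
    (hy0 : ∀ i, y 0 i = if i ∈ Lab then yl i else 0)
    (hys : ∀ t i, y (t + 1) i = if i ∈ Lab then yl i else ∑ j, P i j * y t j) :
    ∃ z : {i : Fin n // i ∉ Lab} → ℝ,
      ((1 - P.submatrix (Subtype.val : {i : Fin n // i ∉ Lab} → Fin n)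
          Subtype.val).mulVec z = fun u => ∑ j ∈ Lab, P u.1 j * yl j) ∧
      (∀ z' : {i : Fin n // i ∉ Lab} → ℝ,
        ((1 - P.submatrix (Subtype.val : {i : Fin n // i ∉ Lab} → Fin n)
            Subtype.val).mulVec z' = fun u => ∑ j ∈ Lab, P u.1 j * yl j) → z' = z) ∧
      Filter.Tendsto y Filter.atTop
        (nhds fun i => if h : i ∈ Lab then yl i else z ⟨i, h⟩) := by
  classical
  -- basic facts about P
  have hPnn : ∀ i j, 0 ≤ P i j := fun i j => by
    rw [hP]; exact div_nonneg (hnn i j) (le_of_lt (hdeg i))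
  have hProw : ∀ i, ∑ j, P i j = 1 := fun i => by
    simp only [hP]; rw [← Finset.sum_div]; exact div_self (ne_of_gt (hdeg i))
  have hPpos : ∀ i j, 0 < A i j → 0 < P i j := fun i j h => by
    rw [hP]; exact div_pos h (hdeg i)
  have hylab : ∀ t, ∀ j ∈ Lab, y t j = yl j := by
    intro t j hj
    cases t with
    | zero => rw [hy0]; simp [hj]
    | succ t => rw [hys]; simp [hj]
  set Q : Matrix {i : Fin n // i ∉ Lab} {i : Fin n // i ∉ Lab} ℝ :=
    P.submatrix Subtype.val Subtype.val with hQdef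
  have hQnn1 : ∀ u v, 0 ≤ Q u v := fun u v => hPnn _ _
  have hQnn : ∀ (k : ℕ) (u v : {i : Fin n // i ∉ Lab}), 0 ≤ (Q ^ k) u v := by
    intro k
    induction k with
    | zero => intro u v; rw [pow_zero]; by_cases h : u = v <;> simp [Matrix.one_apply, h]
    | succ k ih =>
      intro u v
      rw [pow_succ, Matrix.mul_apply]
      exact Finset.sum_nonneg fun x _ => mul_nonneg (ih u x) (hQnn1 x v)
  have hsub : ∀ (f : Fin n → ℝ), ∑ v : {i : Fin n // i ∉ Lab}, f v.1 = ∑ j ∈ Labᶜ, f j :=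
    fun f => (Finset.sum_subtype Labᶜ (fun x => Finset.mem_compl) f).symm
  have hQrow : ∀ u : {i : Fin n // i ∉ Lab}, ∑ v, Q u v = 1 - ∑ j ∈ Lab, P u.1 j := by
    intro u
    have h1 : ∑ v : {i : Fin n // i ∉ Lab}, Q u v = ∑ j ∈ Labᶜ, P u.1 j := hsub (fun j => P u.1 j)
    have h2 := Finset.sum_add_sum_compl Lab (fun j => P u.1 j)
    rw [hProw u.1] at h2
    rw [h1]; linarith
  have hQrow_le : ∀ u, ∑ v, Q u v ≤ 1 := by
    intro u
    rw [hQrow]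
    have : (0:ℝ) ≤ ∑ j ∈ Lab, P u.1 j := Finset.sum_nonneg fun j _ => hPnn _ _
    linarith
  -- the row-sum vectors of powers of Q
  set r : ℕ → {i : Fin n // i ∉ Lab} → ℝ := fun k => (Q ^ k).mulVec (fun _ => 1) with hrdef
  have hr_apply : ∀ k u, r k u = ∑ v, (Q ^ k) u v := by
    intro k u
    simp [hrdef, Matrix.mulVec, dotProduct]
  have hr_succ : ∀ k, r (k + 1) = Q.mulVec (r k) := by
    intro k
    rw [hrdef]
    simp only
    rw [pow_succ' Q k, ← Matrix.mulVec_mulVec]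
  have hr_succ_apply : ∀ k u, r (k + 1) u = ∑ v, Q u v * r k v := by
    intro k u
    rw [hr_succ k]
    simp [Matrix.mulVec, dotProduct]
  have hr_nonneg : ∀ k u, 0 ≤ r k u := by
    intro k u
    rw [hr_apply]
    exact Finset.sum_nonneg fun v _ => hQnn k u v
  have hr_le_one : ∀ k u, r k u ≤ 1 := by
    intro k
    induction k with
    | zero => intro u; simp [hrdef, pow_zero, Matrix.one_mulVec]
    | succ k ih =>
      intro u
      rw [hr_succ_apply]
      calc ∑ v, Q u v * r k v ≤ ∑ v, Q u v :=
            Finset.sum_le_sum fun v _ => mul_le_of_le_one_right (hQnn1 u v) (ih v)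
        _ ≤ 1 := hQrow_le u
  have hr_mono : ∀ k u, r (k + 1) u ≤ r k u := by
    intro k
    induction k with
    | zero =>
      intro u
      have : r 0 u = 1 := by simp [hrdef, pow_zero, Matrix.one_mulVec]
      rw [this]; exact hr_le_one 1 u
    | succ k ih =>
      intro u
      rw [hr_succ_apply, hr_succ_apply]
      exact Finset.sum_le_sum fun v _ => mul_le_mul_of_nonneg_left (ih v) (hQnn1 u v)
  have hr_anti : ∀ k m, k ≤ m → ∀ u, r m u ≤ r k u := by
    intro k m hkm
    induction m, hkm using Nat.le_induction with
    | base => intro u; exact le_rfl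
    | succ m hm ih => intro u; exact le_trans (hr_mono m u) (ih u)
  -- key strict inequality along label-connecting paths
  have key : ∀ (k : ℕ) (w : ℕ → Fin n) (u : {i : Fin n // i ∉ Lab}), w 0 = u.1 →
      (∀ i < k, 0 < A (w i) (w (i + 1))) → (∀ i < k, w i ∉ Lab) → w k ∈ Lab →
      r k u < 1 := by
    intro k
    induction k with
    | zero =>
      intro w u hw0 _ _ hk
      exact absurd (hw0 ▸ hk) u.2
    | succ k ih =>
      intro w u hw0 hA hU hk
      have hA0 : 0 < A (w 0) (w 1) := hA 0 (Nat.succ_pos k)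
      have hP01 : 0 < P u.1 (w 1) := hw0 ▸ hPpos _ _ hA0
      cases Nat.eq_zero_or_pos k with
      | inl hk0 =>
        subst hk0
        have hw1 : w 1 ∈ Lab := hk
        have h1 : r 1 u = 1 - ∑ j ∈ Lab, P u.1 j := by
          rw [hr_apply, ← hQrow]
          exact Finset.sum_congr rfl fun v _ => by rw [pow_one]
        have hle : P u.1 (w 1) ≤ ∑ j ∈ Lab, P u.1 j :=
          Finset.single_le_sum (fun j _ => hPnn u.1 j) hw1
        rw [h1]; linarith
      | inr hkpos =>
        have h1 : w 1 ∉ Lab := hU 1 (by omega)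
        set v : {i : Fin n // i ∉ Lab} := ⟨w 1, h1⟩ with hvdef
        have ihv : r k v < 1 :=
          ih (fun i => w (i + 1)) v rfl (fun i hi => hA (i + 1) (by omega))
            (fun i hi => hU (i + 1) (by omega)) hk
        have hQuv : 0 < Q u v := by
          have : Q u v = P u.1 (w 1) := rfl
          rw [this]; exact hP01
        rw [hr_succ_apply]
        have hsplit := Finset.add_sum_erase Finset.univ (fun x => Q u x * r k x)
          (Finset.mem_univ v)
        have hsplit2 := Finset.add_sum_erase Finset.univ (fun x => Q u x)
          (Finset.mem_univ v)
        have hb1 : ∑ x ∈ Finset.univ.erase v, Q u x * r k x ≤ ∑ x ∈ Finset.univ.erase v, Q u x :=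
          Finset.sum_le_sum fun x _ => mul_le_of_le_one_right (hQnn1 u x) (hr_le_one k x)
        have hb2 : Q u v * r k v < Q u v := by nlinarith
        have := hQrow_le u
        calc ∑ x, Q u x * r k x
            = Q u v * r k v + ∑ x ∈ Finset.univ.erase v, Q u x * r k x := hsplit.symm
          _ < Q u v + ∑ x ∈ Finset.univ.erase v, Q u x := by linarith
          _ = ∑ x, Q u x := hsplit2
          _ ≤ 1 := hQrow_le u
  -- for every unlabeled u there is k with r k u < 1
  have hux : ∀ u : {i : Fin n // i ∉ Lab}, ∃ k, r k u < 1 := by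
    intro u
    obtain ⟨t, v, hv0, hvA, hvl⟩ := hconn u.1 u.2
    set w : ℕ → Fin n := fun i => v ⟨min i t, Nat.lt_succ_of_le (Nat.min_le_right i t)⟩
      with hwdef
    have hw : ∀ i (hi : i ≤ t), w i = v ⟨i, Nat.lt_succ_of_le hi⟩ := by
      intro i hi
      simp only [hwdef]
      congr 1
      exact Fin.ext (Nat.min_eq_left hi)
    have hwt : w t ∈ Lab := by
      rw [hw t le_rfl]
      have : (⟨t, Nat.lt_succ_of_le le_rfl⟩ : Fin (t + 1)) = Fin.last t := rfl
      rw [this]; exact hvl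
    have hex : ∃ i, w i ∈ Lab := ⟨t, hwt⟩
    set m := Nat.find hex with hmdef
    have hm : w m ∈ Lab := Nat.find_spec hex
    have hmin : ∀ i < m, w i ∉ Lab := fun i hi => Nat.find_min hex hi
    have hmt : m ≤ t := Nat.find_min' hex hwt
    have hw0 : w 0 = u.1 := by
      rw [hw 0 (Nat.zero_le t)]
      have : (⟨0, Nat.lt_succ_of_le (Nat.zero_le t)⟩ : Fin (t + 1)) = 0 := rfl
      rw [this]; exact hv0
    refine ⟨m, key m w u hw0 ?_ hmin hm⟩
    intro i hi
    have hit : i < t := by omega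
    rw [hw i (by omega), hw (i + 1) (by omega)]
    simpa [Fin.castSucc_mk, Fin.succ_mk] using hvA ⟨i, hit⟩
  by_cases hne : Nonempty {i : Fin n // i ∉ Lab}
  · -- nonempty unlabeled set
    haveI := hne
    choose kk hkk using hux
    set N := Finset.univ.sup kk with hNdef
    have hrN : ∀ u, r N u < 1 := fun u =>
      lt_of_le_of_lt (hr_anti (kk u) N (Finset.le_sup (Finset.mem_univ u)) u) (hkk u)
    set c := Finset.univ.sup' Finset.univ_nonempty (r N) with hcdef
    have hc1 : c < 1 := (Finset.sup'_lt_iff _).mpr fun u _ => hrN u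
    have hrNc : ∀ u, r N u ≤ c := fun u => Finset.le_sup' (r N) (Finset.mem_univ u)
    have hc0 : 0 ≤ c :=
      le_trans (hr_nonneg N (Classical.arbitrary _)) (hrNc _)
    -- contraction in sup norm
    have hcontr : ∀ (M : Matrix {i : Fin n // i ∉ Lab} {i : Fin n // i ∉ Lab} ℝ) (s : ℝ),
        0 ≤ s → (∀ u v, 0 ≤ M u v) → (∀ u, ∑ v, M u v ≤ s) →
        ∀ x, ‖M.mulVec x‖ ≤ s * ‖x‖ := by
      intro M s hs hMnn hMrow x
      rw [pi_norm_le_iff_of_nonneg (mul_nonneg hs (norm_nonneg x))]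
      intro u
      have : ‖M.mulVec x u‖ = |∑ v, M u v * x v| := by
        simp [Matrix.mulVec, dotProduct, Real.norm_eq_abs]
      rw [this]
      calc |∑ v, M u v * x v| ≤ ∑ v, |M u v * x v| := Finset.abs_sum_le_sum_abs _ _
        _ ≤ ∑ v, M u v * ‖x‖ := by
            refine Finset.sum_le_sum fun v _ => ?_
            rw [abs_mul, abs_of_nonneg (hMnn u v)]
            exact mul_le_mul_of_nonneg_left
              ((Real.norm_eq_abs (x v)) ▸ norm_le_pi_norm x v) (hMnn u v)
        _ = (∑ v, M u v) * ‖x‖ := by rw [Finset.sum_mul]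
        _ ≤ s * ‖x‖ := mul_le_mul_of_nonneg_right (hMrow u) (norm_nonneg x)
    have hQNrow : ∀ u, ∑ v, (Q ^ N) u v ≤ c := fun u => (hr_apply N u) ▸ hrNc u
    have hcontrN : ∀ x, ‖(Q ^ N).mulVec x‖ ≤ c * ‖x‖ :=
      hcontr (Q ^ N) c hc0 (hQnn N) hQNrow
    have hcontr1 : ∀ x, ‖Q.mulVec x‖ ≤ ‖x‖ := by
      intro x
      have := hcontr Q 1 zero_le_one hQnn1 hQrow_le x
      simpa using this
    -- injectivity and surjectivity of (1 - Q)
    have hker : ∀ w : {i : Fin n // i ∉ Lab} → ℝ, (1 - Q).mulVec w = 0 → w = 0 := by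
      intro w hw
      have hfix : Q.mulVec w = w := by
        rw [Matrix.sub_mulVec, Matrix.one_mulVec] at hw
        have := sub_eq_zero.mp hw
        exact this.symm
      have hfixN : ∀ m, (Q ^ m).mulVec w = w := by
        intro m
        induction m with
        | zero => rw [pow_zero, Matrix.one_mulVec]
        | succ m ih => rw [pow_succ' Q m, ← Matrix.mulVec_mulVec, ih, hfix]
      have hb : ‖w‖ ≤ c * ‖w‖ := by
        have h := hcontrN w
        rw [hfixN N] at h
        exact h
      have : ‖w‖ = 0 := by nlinarith [norm_nonneg w]
      exact norm_eq_zero.mp this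
    have hinj : Function.Injective (1 - Q).mulVecLin := by
      intro a b hab
      have : (1 - Q).mulVec (a - b) = 0 := by
        have := map_sub (1 - Q).mulVecLin a b
        rw [hab] at this
        simpa only [Matrix.mulVecLin_apply, sub_self] using this
      exact sub_eq_zero.mp (hker _ this)
    have hsurj : Function.Surjective (1 - Q).mulVecLin :=
      LinearMap.injective_iff_surjective.mp hinj
    set b : {i : Fin n // i ∉ Lab} → ℝ := fun u => ∑ j ∈ Lab, P u.1 j * yl j with hbdef
    obtain ⟨z, hz⟩ := hsurj b
    rw [Matrix.mulVecLin_apply] at hz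
    refine ⟨z, hz, ?_, ?_⟩
    · intro z' hz'
      apply hinj
      rw [Matrix.mulVecLin_apply, Matrix.mulVecLin_apply, hz, hz']
    · -- convergence
      have hzfix : Q.mulVec z + b = z := by
        have h1 : z - Q.mulVec z = b := by
          rw [← hz, Matrix.sub_mulVec, Matrix.one_mulVec]
        rw [← h1]; abel
      set x : ℕ → {i : Fin n // i ∉ Lab} → ℝ := fun t u => y t u.1 with hxdef
      have hstep : ∀ t, x (t + 1) = Q.mulVec (x t) + b := by
        intro t
        funext u
        have hu : u.1 ∉ Lab := u.2
        have e1 : x (t + 1) u = ∑ j, P u.1 j * y t j := by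
          rw [hxdef]; simp only; rw [hys t u.1, if_neg hu]
        have split := Finset.sum_add_sum_compl Lab (fun j => P u.1 j * y t j)
        have hLabsum : ∑ j ∈ Lab, P u.1 j * y t j = b u :=
          Finset.sum_congr rfl fun j hj => by rw [hylab t j hj]
        have hcompsum : ∑ j ∈ Labᶜ, P u.1 j * y t j = Q.mulVec (x t) u := by
          rw [← hsub (fun j => P u.1 j * y t j)]
          simp only [Matrix.mulVec, dotProduct, hxdef]
          exact Finset.sum_congr rfl fun v _ => rfl
        rw [e1, ← split, hLabsum, hcompsum, Pi.add_apply]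
        ring
      have hstep' : ∀ t, x (t + 1) - z = Q.mulVec (x t - z) := by
        intro t
        have h2 : Q.mulVec (x t - z) = Q.mulVec (x t) - Q.mulVec z := by
          rw [← Matrix.mulVecLin_apply, ← Matrix.mulVecLin_apply, ← Matrix.mulVecLin_apply,
            ← map_sub]
        rw [hstep t, h2]
        conv_lhs => rw [← hzfix]
        abel
      have he : ∀ t, x t - z = (Q ^ t).mulVec (x 0 - z) := by
        intro t
        induction t with
        | zero => rw [pow_zero, Matrix.one_mulVec]
        | succ t ih => rw [hstep' t, ih, Matrix.mulVec_mulVec, ← pow_succ' Q t]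
      have heN : ∀ s, x (s + N) - z = (Q ^ N).mulVec (x s - z) := by
        intro s
        rw [he (s + N), he s, Matrix.mulVec_mulVec, ← pow_add, add_comm s N]
      have hdec : ∀ t s, t ≤ s → ‖x s - z‖ ≤ ‖x t - z‖ := by
        intro t s hts
        induction s, hts using Nat.le_induction with
        | base => exact le_rfl
        | succ s hs ih =>
          rw [hstep' s]
          exact le_trans (hcontr1 _) ih
      have hgeo : ∀ q, ‖x (q * N) - z‖ ≤ c ^ q * ‖x 0 - z‖ := by
        intro q
        induction q with
        | zero => simp
        | succ q ih =>
          have e : (q + 1) * N = q * N + N := by ring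
          rw [e, heN (q * N)]
          calc ‖(Q ^ N).mulVec (x (q * N) - z)‖ ≤ c * ‖x (q * N) - z‖ := hcontrN _
            _ ≤ c * (c ^ q * ‖x 0 - z‖) := mul_le_mul_of_nonneg_left ih hc0
            _ = c ^ (q + 1) * ‖x 0 - z‖ := by ring
      have hxz : Filter.Tendsto x Filter.atTop (nhds z) := by
        rw [Metric.tendsto_atTop]
        intro ε hε
        have hlim : Filter.Tendsto (fun q => c ^ q * ‖x 0 - z‖) Filter.atTop (nhds 0) := by
          have := (tendsto_pow_atTop_nhds_zero_of_lt_one hc0 hc1).mul_const ‖x 0 - z‖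
          simpa using this
        obtain ⟨q0, hq0⟩ := (Metric.tendsto_atTop.mp hlim) ε hε
        have hq0' : c ^ q0 * ‖x 0 - z‖ < ε := by
          have := hq0 q0 le_rfl
          rw [Real.dist_eq, sub_zero] at this
          calc c ^ q0 * ‖x 0 - z‖ ≤ |c ^ q0 * ‖x 0 - z‖| := le_abs_self _
            _ < ε := this
        refine ⟨q0 * N, fun t ht => ?_⟩
        rw [dist_eq_norm]
        calc ‖x t - z‖ ≤ ‖x (q0 * N) - z‖ := hdec _ _ ht
          _ ≤ c ^ q0 * ‖x 0 - z‖ := hgeo q0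
          _ < ε := hq0'
      rw [tendsto_pi_nhds]
      intro i
      by_cases hi : i ∈ Lab
      · have : (fun t => y t i) = fun _ => yl i := funext fun t => hylab t i hi
        rw [this]
        simp only [dif_pos hi]
        exact tendsto_const_nhds
      · have h := tendsto_pi_nhds.mp hxz ⟨i, hi⟩
        simp only [dif_neg hi]
        exact h
  · -- all vertices labeled
    haveI : IsEmpty {i : Fin n // i ∉ Lab} := not_nonempty_iff.mp hne
    refine ⟨fun _ => 0, ?_, ?_, ?_⟩
    · funext u; exact (IsEmpty.false u).elim
    · intro z' _; funext u; exact (IsEmpty.false u).elim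
    · have hall : ∀ i : Fin n, i ∈ Lab := by
        intro i
        by_contra h
        exact IsEmpty.false (⟨i, h⟩ : {i : Fin n // i ∉ Lab})
      have : y = fun _ => (fun i => if h : i ∈ Lab then yl i else 0) := by
        funext t i
        rw [dif_pos (hall i)]
        exact hylab t i (hall i)
      rw [this]
      exact tendsto_const_nhds
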